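/- Let G, x₀, Y, λ, G⁺(Y) and the generic site set S_Y be as above. Then for any finite nonempty set U of vertices of G, max over u ∈ U of d_{G⁺(Y)}(x₀,u) equals max over y ∈ Y with cell_G(s_y,S_Y) ∩ U nonempty of ( λ(x₀,y) + max over u ∈ cell_G(s_y,S_Y) ∩ U of d_G(y,u) ). -/
import Mathlib


inductive DWalk {V : Type*} (A : V → V → Prop) : V → V → Type _ where
  | nil : (v : V) → DWalk A v v
  | cons : {u v w : V} → A u v → DWalk A v w → DWalk A u w

def DWalk.len {V : Type*} {A : V → V → Prop} (f : V → V → ℝ) :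
    ∀ {u w : V}, DWalk A u w → ℝ
  | _, _, .nil _ => 0
  | u, _, .cons (v := v) _ p => f u v + DWalk.len f p

def DWalk.support {V : Type*} {A : V → V → Prop} :
    ∀ {u w : V}, DWalk A u w → List V
  | u, _, .nil _ => [u]
  | u, _, .cons _ p => u :: DWalk.support p

def DWalk.lastArc {V : Type*} {A : V → V → Prop} :
    ∀ {u w : V}, DWalk A u w → Option (V × V)
  | _, _, .nil _ => none
  | u, _, .cons (v := v) _ p =>
      match DWalk.lastArc p with
      | none => some (u, v)
      | some pr => some pr

/-- Shortest-path distance: infimum of lengths of walks. -/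
noncomputable def ddist {V : Type*} (A : V → V → Prop) (f : V → V → ℝ) (s t : V) : ℝ :=
  sInf {x : ℝ | ∃ p : DWalk A s t, DWalk.len f p = x}


/-- The arc relation of `G⁺(Y)`: the new vertex `x₀` is modelled as `none`,
the vertices of `G` as `some v`; arcs go from `x₀` to each `y ∈ Y`. -/
def Aplus {V : Type*} (A : V → V → Prop) (Y : Set V) :
    Option V → Option V → Prop
  | some u, some v => A u v
  | none, some y => y ∈ Y
  | _, _ => False

/-- Arc lengths in `G⁺(Y)`: `lamb y` on the new arc `(x₀, y)`. -/
def lamplus {V : Type*} (lam : V → V → ℝ) (lamb : V → ℝ) :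
    Option V → Option V → ℝ
  | some u, some v => lam u v
  | none, some y => lamb y
  | _, _ => 0


/-- The graphic Voronoi cell of the site `s_y = (y, lamb y)` with respect to
the sites `S_Y = {(y, lamb y) : y ∈ Y}`. -/
def cellY {V : Type*} (A : V → V → Prop) (lam : V → V → ℝ)
    (Y : Finset V) (lamb : V → ℝ) (y : V) : Set V :=
  {x | ∀ y' ∈ Y, y' ≠ y →
    lamb y + ddist A lam y x ≤ lamb y' + ddist A lam y' x}


namespace DWalk

variable {V : Type*} {A : V → V → Prop}

def append : ∀ {u v w : V}, DWalk A u v → DWalk A v w → DWalk A u w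
  | _, _, _, .nil _, q => q
  | _, _, _, .cons h p, q => .cons h (p.append q)

theorem len_append (f : V → V → ℝ) : ∀ {u v w : V} (p : DWalk A u v) (q : DWalk A v w),
    (p.append q).len f = p.len f + q.len f
  | _, _, _, .nil _, q => by simp [append, len]
  | _, _, _, .cons h p, q => by
      simp only [append, len, len_append f p q]; ring

theorem support_eq_cons : ∀ {u w : V} (p : DWalk A u w), p.support = u :: p.support.tail
  | _, _, .nil _ => rfl
  | _, _, .cons _ _ => rfl

theorem support_append : ∀ {u v w : V} (p : DWalk A u v) (q : DWalk A v w),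
    (p.append q).support = p.support ++ q.support.tail
  | _, _, _, .nil v, q => by
      simpa [append, support] using support_eq_cons q
  | _, _, _, .cons h p, q => by
      simp [append, support, support_append p q]

theorem split [DecidableEq V] (f : V → V → ℝ) :
    ∀ {u w : V} (p : DWalk A u w) (v : V), v ∈ p.support →
    ∃ (q : DWalk A u v) (r : DWalk A v w),
      p.len f = q.len f + r.len f ∧
      p.support = q.support ++ r.support.tail ∧
      q.support.count v = 1
  | _, _, .nil u, v, hv => by
      simp only [support, List.mem_singleton] at hv
      subst hv
      exact ⟨.nil v, .nil v, by simp [len], by simp [support], by simp [support]⟩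
  | _, _, .cons (u := u) (v := m) h p, v, hv => by
      rcases eq_or_ne v u with rfl | hne
      · refine ⟨.nil v, .cons h p, by simp [len], ?_, by simp [support]⟩
        simpa [support] using support_eq_cons (DWalk.cons h p)
      · have hv' : v ∈ p.support := by
          simp only [support, List.mem_cons] at hv
          exact hv.resolve_left hne
        obtain ⟨q', r', hlen, hsup, hcount⟩ := split f p v hv'
        refine ⟨.cons h q', r', ?_, ?_, ?_⟩
        · simp [len, hlen]; ring
        · simp [support, hsup]
        · simpa [support, List.count_cons, hne.symm] using hcount

theorem exists_nodup_aux (f : V → V → ℝ)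
    (hNoNeg : ∀ (v : V) (c : DWalk A v v), 0 ≤ DWalk.len f c) :
    ∀ (n : ℕ) {s t : V} (p : DWalk A s t), p.support.length ≤ n →
      ∃ q : DWalk A s t, q.support.Nodup ∧ q.len f ≤ p.len f := by
  classical
  intro n
  induction n with
  | zero =>
    intro s t p hp
    rw [support_eq_cons p] at hp
    simp at hp
  | succ n ih =>
    intro s t p hp
    by_cases hnd : p.support.Nodup
    · exact ⟨p, hnd, le_refl _⟩
    · obtain ⟨v, hdup⟩ := List.exists_duplicate_iff_not_nodup.2 hnd
      have hcnt : 2 ≤ p.support.count v := List.duplicate_iff_two_le_count.1 hdup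
      have hv : v ∈ p.support := List.Duplicate.mem hdup
      obtain ⟨q1, r, hlen, hsup, hcq⟩ := split f p v hv
      -- v occurs in r.support.tail
      have hrcons : r.support = v :: r.support.tail := support_eq_cons r
      have hcnt2 : 1 ≤ r.support.tail.count v := by
        have := hcnt
        rw [hsup, List.count_append, hcq] at this
        omega
      have hvtail : v ∈ r.support.tail := by
        exact List.one_le_count_iff.mp hcnt2
      -- r cannot be nil
      cases r with
      | nil =>
        simp [support] at hvtail
      | cons h2 r2 =>
        rename_i m
        have hvr2 : v ∈ r2.support := by
          simpa [support] using hvtail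
        obtain ⟨c, d, hlen2, hsup2, _⟩ := split f r2 v hvr2
        -- cycle: cons h2 c : v → v
        have hcyc : (0 : ℝ) ≤ (DWalk.cons h2 c).len f := hNoNeg v _
        have hlen3 : (q1.append d).len f ≤ p.len f := by
          rw [len_append, hlen]
          have : r2.len f = c.len f + d.len f := hlen2
          simp only [len] at hcyc ⊢
          nlinarith [hcyc, this]
        have hsize : (q1.append d).support.length ≤ n := by
          have h1 : p.support.length ≤ n + 1 := hp
          have h2 : p.support.length
              = q1.support.length + r2.support.length := by
            rw [hsup]
            simp [support]
          have h3 : r2.support.length = c.support.length + d.support.tail.length := by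
            rw [hsup2, List.length_append]
          have h4 : 1 ≤ c.support.length := by
            rw [support_eq_cons c]; simp
          have h5 : (q1.append d).support.length
              = q1.support.length + d.support.tail.length := by
            rw [support_append, List.length_append]
          omega
        obtain ⟨q, hq, hqle⟩ := ih (q1.append d) hsize
        exact ⟨q, hq, le_trans hqle hlen3⟩

def listLen (f : V → V → ℝ) : List V → ℝ
  | [] => 0
  | [_] => 0
  | a :: b :: l => f a b + listLen f (b :: l)

theorem len_eq_listLen (f : V → V → ℝ) :
    ∀ {u w : V} (p : DWalk A u w), p.len f = listLen f p.support
  | _, _, .nil _ => by simp [len, support, listLen]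
  | _, _, .cons (u := u) (v := m) h p => by
    have h1 : p.support = m :: p.support.tail := support_eq_cons p
    have h2 := len_eq_listLen f p
    simp only [len, support]
    rw [h2, h1, listLen]

variable [Fintype V]

theorem lengths_bddBelow_attained (f : V → V → ℝ)
    (hNoNeg : ∀ (v : V) (c : DWalk A v v), 0 ≤ DWalk.len f c)
    {s t : V} (h : Nonempty (DWalk A s t)) :
    (∃ p : DWalk A s t, p.len f = ddist A f s t) ∧
      (∀ p : DWalk A s t, ddist A f s t ≤ p.len f) := by
  classical
  set S : Set ℝ := {x : ℝ | ∃ p : DWalk A s t, DWalk.len f p = x} with hS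
  set N : Set ℝ := {x : ℝ | ∃ p : DWalk A s t, p.support.Nodup ∧ DWalk.len f p = x} with hN
  have hNfin : N.Finite := by
    apply Set.Finite.subset ((List.finite_length_le V (Fintype.card V)).image (listLen f))
    rintro x ⟨p, hnd, rfl⟩
    exact ⟨p.support, hnd.length_le_card, (len_eq_listLen f p).symm⟩
  obtain ⟨p0⟩ := h
  obtain ⟨q0, hq0nd, _⟩ := exists_nodup_aux f hNoNeg p0.support.length p0 le_rfl
  have hNne : N.Nonempty := ⟨q0.len f, q0, hq0nd, rfl⟩
  have hmem : sInf N ∈ N := hNne.csInf_mem hNfin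
  have hlb : ∀ x ∈ S, sInf N ≤ x := by
    rintro x ⟨p, rfl⟩
    obtain ⟨q, hqnd, hqle⟩ := exists_nodup_aux f hNoNeg p.support.length p le_rfl
    exact le_trans (csInf_le hNfin.bddBelow ⟨q, hqnd, rfl⟩) hqle
  have hSin : sInf N ∈ S := by obtain ⟨p, _, hp⟩ := hmem; exact ⟨p, hp⟩
  have : ddist A f s t = sInf N := by
    apply le_antisymm
    · exact csInf_le ⟨sInf N, hlb⟩ hSin
    · exact le_csInf ⟨_, hSin⟩ hlb
  constructor
  · obtain ⟨p, _, hp⟩ := hmem; exact ⟨p, by rw [this]; exact hp⟩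
  · intro p; rw [this]; exact hlb _ ⟨p, rfl⟩

end DWalk

section Plus

variable {V : Type*} {A : V → V → Prop} {Y : Set V}

/-- Lower a walk in `G⁺` between `some` vertices to a walk in `G`. -/
theorem lower {lam : V → V → ℝ} {lamb : V → ℝ} :
    ∀ {o₁ o₂ : Option V} (p : DWalk (Aplus A Y) o₁ o₂) {a b : V},
      o₁ = some a → o₂ = some b →
      ∃ q : DWalk A a b, q.len lam = p.len (lamplus lam lamb) := by
  intro o₁ o₂ p
  induction p with
  | nil o =>
    intro a b h1 h2
    subst h1; cases h2
    exact ⟨.nil a, rfl⟩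
  | cons h p ih =>
    rename_i o₁ v o₂
    intro a b h1 h2
    subst h1; subst h2
    cases v with
    | none => exact absurd h (by simp [Aplus])
    | some c =>
      obtain ⟨q', hq'⟩ := ih rfl rfl
      exact ⟨.cons h q', by simp [DWalk.len, hq', lamplus]⟩

/-- Lift a walk in `G` to `G⁺`. -/
theorem lift {lam : V → V → ℝ} {lamb : V → ℝ} :
    ∀ {a b : V} (q : DWalk A a b),
      ∃ p : DWalk (Aplus A Y) (some a) (some b),
        p.len (lamplus lam lamb) = q.len lam := by
  intro a b q
  induction q with
  | nil a => exact ⟨.nil (some a), rfl⟩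
  | cons h q ih =>
    obtain ⟨p', hp'⟩ := ih
    refine ⟨.cons ?_ p', ?_⟩
    · exact h
    · simp [DWalk.len, hp', lamplus]

end Plus

section Key

variable {V : Type*} [Fintype V] (A : V → V → Prop) (lam : V → V → ℝ)

theorem hNoNegPlus {Y : Set V} (hNoNeg : ∀ (v : V) (c : DWalk A v v), 0 ≤ DWalk.len lam c)
    {lamb : V → ℝ} (u : V) (c : DWalk (Aplus A Y) (some u) (some u)) :
    0 ≤ c.len (lamplus lam lamb) := by
  obtain ⟨q, hq⟩ := lower c rfl rfl
  rw [← hq]; exact hNoNeg u q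

theorem key (hNoNeg : ∀ (v : V) (c : DWalk A v v), 0 ≤ DWalk.len lam c)
    (Y : Finset V) (lamb : V → ℝ)
    (hreach : ∀ y ∈ Y, ∀ u : V, Nonempty (DWalk A y u))
    {y : V} (hy : y ∈ Y) {u : V} (hu : u ∈ cellY A lam Y lamb y) :
    ddist (Aplus A ↑Y) (lamplus lam lamb) none (some u) = lamb y + ddist A lam y u := by
  obtain ⟨⟨pyu, hpyu⟩, hle⟩ :=
    DWalk.lengths_bddBelow_attained lam hNoNeg (hreach y hy u)
  have hmem : ∃ p : DWalk (Aplus A ↑Y) none (some u),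
      p.len (lamplus lam lamb) = lamb y + ddist A lam y u := by
    obtain ⟨p', hp'⟩ := lift (lam := lam) (lamb := lamb) (Y := (↑Y : Set V)) pyu
    refine ⟨.cons (show Aplus A ↑Y none (some y) from hy) p', ?_⟩
    simp [DWalk.len, lamplus, hp', hpyu]
  have hlb : ∀ x ∈ {x : ℝ | ∃ p : DWalk (Aplus A ↑Y) none (some u),
      DWalk.len (lamplus lam lamb) p = x}, lamb y + ddist A lam y u ≤ x := by
    rintro x ⟨p, rfl⟩
    cases p with
    | cons h p' =>
      rename_i v
      cases v with
      | none => exact absurd h (by simp [Aplus])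
      | some y' =>
        have hy' : y' ∈ Y := h
        obtain ⟨q, hq⟩ := lower (lam := lam) (lamb := lamb) p' rfl rfl
        have h1 : ddist A lam y' u ≤ q.len lam :=
          (DWalk.lengths_bddBelow_attained lam hNoNeg (hreach y' hy' u)).2 q
        have h2 : lamb y + ddist A lam y u ≤ lamb y' + ddist A lam y' u := by
          rcases eq_or_ne y' y with rfl | hne
          · exact le_refl _
          · exact hu y' hy' hne
        calc lamb y + ddist A lam y u ≤ lamb y' + ddist A lam y' u := h2
          _ ≤ lamb y' + q.len lam := by linarith
          _ = DWalk.len (lamplus lam lamb) (DWalk.cons h p') := by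
              simp [DWalk.len, lamplus, hq]
  obtain ⟨p, hp⟩ := hmem
  rw [ddist]
  apply le_antisymm
  · exact csInf_le ⟨_, hlb⟩ ⟨p, hp⟩
  · exact le_csInf ⟨_, p, hp⟩ hlb

theorem cover (Y : Finset V) (lamb : V → ℝ) (hY : Y.Nonempty) (u : V) :
    ∃ y ∈ Y, u ∈ cellY A lam Y lamb y := by
  obtain ⟨y, hy, hmin⟩ := Y.exists_min_image (fun y => lamb y + ddist A lam y u) hY
  exact ⟨y, hy, fun y' hy' _ => hmin y' hy'⟩

end Key

section Main

variable {V : Type*} [Fintype V] (A : V → V → Prop) (lam : V → V → ℝ)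

theorem ddist_none_of_empty (lamb : V → ℝ) (u : V) :
    ddist (Aplus A (↑(∅ : Finset V))) (lamplus lam lamb) none (some u) = 0 := by
  have : {x : ℝ | ∃ p : DWalk (Aplus A (↑(∅ : Finset V))) none (some u),
      DWalk.len (lamplus lam lamb) p = x} = ∅ := by
    ext x
    simp only [Set.mem_setOf_eq, Set.mem_empty_iff_false, iff_false, not_exists]
    rintro p -
    cases p with
    | cons h p' =>
      rename_i v
      cases v with
      | none => exact absurd h (by simp [Aplus])
      | some y => exact absurd h (by simp [Aplus])
  rw [ddist, this, Real.sInf_empty]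

theorem stmt15' (hNoNeg : ∀ (v : V) (c : DWalk A v v), 0 ≤ DWalk.len lam c)
    (Y : Finset V) (lamb : V → ℝ)
    (hreach : ∀ y ∈ Y, ∀ u : V, Nonempty (DWalk A y u))
    (U : Finset V) (hU : U.Nonempty) :
    sSup ((fun u => ddist (Aplus A ↑Y) (lamplus lam lamb) none (some u)) '' ↑U)
      = sSup ((fun y => lamb y +
            sSup ((fun u => ddist A lam y u) '' (↑U ∩ cellY A lam Y lamb y))) ''
          {y : V | y ∈ Y ∧ ((↑U : Set V) ∩ cellY A lam Y lamb y).Nonempty}) := by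
  rcases Y.eq_empty_or_nonempty with rfl | hY
  · have h1 : ((fun u => ddist (Aplus A (↑(∅:Finset V))) (lamplus lam lamb) none (some u)) '' ↑U)
        = {0} := by
      obtain ⟨u0, hu0⟩ := hU
      apply Set.eq_singleton_iff_nonempty_unique_mem.2
      constructor
      · exact ⟨_, ⟨u0, hu0, ddist_none_of_empty A lam lamb u0⟩⟩
      · rintro x ⟨u, -, rfl⟩; exact ddist_none_of_empty A lam lamb u
    have h2 : {y : V | y ∈ (∅ : Finset V) ∧ ((↑U : Set V) ∩ cellY A lam ∅ lamb y).Nonempty}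
        = ∅ := by simp
    rw [h1, h2, Set.image_empty, Real.sSup_empty, csSup_singleton]
  · set L : Set ℝ := (fun u => ddist (Aplus A ↑Y) (lamplus lam lamb) none (some u)) '' ↑U
      with hL
    set T : Set V := {y : V | y ∈ Y ∧ ((↑U : Set V) ∩ cellY A lam Y lamb y).Nonempty} with hT
    set R : Set ℝ := (fun y => lamb y +
        sSup ((fun u => ddist A lam y u) '' (↑U ∩ cellY A lam Y lamb y))) '' T with hR
    have hLfin : L.Finite := U.finite_toSet.image _
    have hTfin : T.Finite := Y.finite_toSet.subset (fun y hy => hy.1)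
    have hRfin : R.Finite := hTfin.image _
    have hLne : L.Nonempty := (hU.to_set).image _
    apply le_antisymm
    · apply csSup_le hLne
      rintro x ⟨u, hu, rfl⟩
      obtain ⟨y, hy, hcell⟩ := cover A lam Y lamb hY u
      have hkey := key A lam hNoNeg Y lamb hreach hy hcell
      have hyT : y ∈ T := ⟨hy, ⟨u, hu, hcell⟩⟩
      have hDfin : ((fun u => ddist A lam y u) '' (↑U ∩ cellY A lam Y lamb y)).Finite :=
        (U.finite_toSet.inter_of_left _).image _
      have h1 : ddist A lam y u
          ≤ sSup ((fun u => ddist A lam y u) '' (↑U ∩ cellY A lam Y lamb y)) :=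
        le_csSup hDfin.bddAbove ⟨u, ⟨hu, hcell⟩, rfl⟩
      have h2 : lamb y + sSup ((fun u => ddist A lam y u) '' (↑U ∩ cellY A lam Y lamb y))
          ≤ sSup R := le_csSup hRfin.bddAbove ⟨y, hyT, rfl⟩
      beta_reduce
      rw [hkey]; linarith
    · apply csSup_le
      · obtain ⟨u0, hu0⟩ := hU
        obtain ⟨y, hy, hcell⟩ := cover A lam Y lamb hY u0
        exact ⟨_, ⟨y, ⟨hy, ⟨u0, hu0, hcell⟩⟩, rfl⟩⟩
      rintro x ⟨y, hyT, rfl⟩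
      set D : Set ℝ := (fun u => ddist A lam y u) '' (↑U ∩ cellY A lam Y lamb y) with hD
      have hDfin : D.Finite := (U.finite_toSet.inter_of_left _).image _
      have hDne : D.Nonempty := hyT.2.image _
      obtain ⟨u, ⟨huU, hucell⟩, hueq⟩ := hDne.csSup_mem hDfin
      have hkey := key A lam hNoNeg Y lamb hreach hyT.1 hucell
      beta_reduce
      rw [← hD, ← hueq, ← hkey]
      exact le_csSup hLfin.bddAbove ⟨u, huU, rfl⟩

end Main

/-- the maximum over `u ∈ U` of `d_{G⁺(Y)}(x₀,u)` decomposes over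
the sites `y ∈ Y` whose cell meets `U`. -/
theorem stmt15 {V : Type*} [Fintype V] (A : V → V → Prop) (lam : V → V → ℝ)
    (hNoNeg : ∀ (v : V) (c : DWalk A v v), 0 ≤ DWalk.len lam c)
    (Y : Finset V) (lamb : V → ℝ)
    (hcond : ∀ y ∈ Y, ∀ y' ∈ Y, y ≠ y' → lamb y < lamb y' + ddist A lam y' y)
    (hreach : ∀ y ∈ Y, ∀ u : V, Nonempty (DWalk A y u))
    (hgen : ∀ x : V, ∀ y ∈ Y, ∀ y' ∈ Y, y ≠ y' →
      lamb y + ddist A lam y x ≠ lamb y' + ddist A lam y' x)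
    (U : Finset V) (hU : U.Nonempty) :
    sSup ((fun u => ddist (Aplus A ↑Y) (lamplus lam lamb) none (some u)) '' ↑U)
      = sSup ((fun y => lamb y +
            sSup ((fun u => ddist A lam y u) '' (↑U ∩ cellY A lam Y lamb y))) ''
          {y : V | y ∈ Y ∧ ((↑U : Set V) ∩ cellY A lam Y lamb y).Nonempty}) := by
  exact stmt15' A lam hNoNeg Y lamb hreach U hU
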